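/- Let φ : Ω → Ω' be a C¹ diffeomorphism between domains in ℝⁿ such that K_n(x,φ) = max(‖Dφ(x)‖ⁿ/|det Dφ(x)|, |det Dφ(x)|/l(Dφ(x))ⁿ) ≤ K for all x and some constant K ≥ 1. Then for every C¹ function f on Ω, ∫_{Ω'} |∇(f∘φ^{-1})(y)|ⁿ dy ≤ K · ∫_Ω |∇f(x)|ⁿ dx; that is, φ^{-1} induces a bounded composition operator L^{1,n}(Ω) → L^{1,n}(Ω') with norm at most K^{1/n}. -/

import Mathlib

open MeasureTheory Metric Set

/-- Minimal stretching `l(A) = min_{|h|=1} |Ah|` of a continuous linear map. -/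
noncomputable def lMin {n : ℕ}
    (A : EuclideanSpace ℝ (Fin n) →L[ℝ] EuclideanSpace ℝ (Fin n)) : ℝ :=
  sInf {r | ∃ h : EuclideanSpace ℝ (Fin n), ‖h‖ = 1 ∧ r = ‖A h‖}

/-- Determinant of a continuous linear map. -/
noncomputable def detCLM {n : ℕ}
    (A : EuclideanSpace ℝ (Fin n) →L[ℝ] EuclideanSpace ℝ (Fin n)) : ℝ :=
  LinearMap.det (A : EuclideanSpace ℝ (Fin n) →ₗ[ℝ] EuclideanSpace ℝ (Fin n))

set_option maxHeartbeats 1000000 in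
set_option synthInstance.maxHeartbeats 400000 in
/-- a C¹ diffeomorphism with maximal dilatation bounded by the
constant `K` induces a bounded composition operator `L^{1,n}(Ω) → L^{1,n}(Ω')`:
`∫_{Ω'} |∇(f∘φ⁻¹)|ⁿ ≤ K · ∫_Ω |∇f|ⁿ`. -/
theorem quasiconformal_composition_operator {n : ℕ} (hn : 2 ≤ n)
    (Ω Ω' : Set (EuclideanSpace ℝ (Fin n))) (hΩ : IsOpen Ω) (hΩ' : IsOpen Ω')
    (φ ψ : EuclideanSpace ℝ (Fin n) → EuclideanSpace ℝ (Fin n))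
    (hφC1 : ContDiffOn ℝ 1 φ Ω) (hψC1 : ContDiffOn ℝ 1 ψ Ω')
    (hbij : Set.BijOn φ Ω Ω') (hinv : Set.InvOn ψ φ Ω Ω')
    (A : EuclideanSpace ℝ (Fin n) →
      (EuclideanSpace ℝ (Fin n) →L[ℝ] EuclideanSpace ℝ (Fin n)))
    (hA : ∀ x ∈ Ω, HasFDerivAt φ (A x) x)
    (hAdet : ∀ x ∈ Ω, detCLM (A x) ≠ 0)
    (K : ℝ) (hK : 1 ≤ K)
    (hqc : ∀ x ∈ Ω,
      max (‖A x‖ ^ n / |detCLM (A x)|) (|detCLM (A x)| / (lMin (A x)) ^ n) ≤ K)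
    (f : EuclideanSpace ℝ (Fin n) → ℝ) (hf : ContDiffOn ℝ 1 f Ω) :
    ∫ y in Ω', ‖fderiv ℝ (f ∘ ψ) y‖ ^ n ≤ K * ∫ x in Ω, ‖fderiv ℝ f x‖ ^ n := by
  have hK0 : (0 : ℝ) ≤ K := le_trans zero_le_one hK
  -- the key pointwise estimates
  have key : ∀ x ∈ Ω,
      |detCLM (A x)| * ‖fderiv ℝ (f ∘ ψ) (φ x)‖ ^ n ≤ K * ‖fderiv ℝ f x‖ ^ n ∧
      ‖fderiv ℝ f x‖ ^ n ≤ K * (|detCLM (A x)| * ‖fderiv ℝ (f ∘ ψ) (φ x)‖ ^ n) := by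
    intro x hx
    have hx' : φ x ∈ Ω' := hbij.mapsTo hx
    have hψφ : ψ (φ x) = x := hinv.1 hx
    have hfdiff : HasFDerivAt f (fderiv ℝ f x) x :=
      (((hf.contDiffAt (hΩ.mem_nhds hx)).differentiableAt one_ne_zero)).hasFDerivAt
    set B := fderiv ℝ ψ (φ x) with hBdef
    have hψdiff : HasFDerivAt ψ B (φ x) :=
      (((hψC1.contDiffAt (hΩ'.mem_nhds hx')).differentiableAt one_ne_zero)).hasFDerivAt
    -- B ∘ A x = id
    have hcomp : HasFDerivAt (ψ ∘ φ) (B.comp (A x)) x := by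
      exact hψdiff.comp x (hA x hx)
    have heq : (id : (EuclideanSpace ℝ (Fin n)) → (EuclideanSpace ℝ (Fin n))) =ᶠ[nhds x] ψ ∘ φ :=
      Filter.eventually_of_mem (hΩ.mem_nhds hx) fun y hy => (hinv.1 hy).symm
    have hBA : B.comp (A x) = ContinuousLinearMap.id ℝ (EuclideanSpace ℝ (Fin n)) :=
      (hcomp.congr_of_eventuallyEq heq).unique (hasFDerivAt_id x)
    have hBAfun : ∀ v, B (A x v) = v := fun v => by
      have := DFunLike.congr_fun hBA v
      simpa using this
    -- A x ∘ B = id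
    have hinj : Function.Injective (A x) := by
      intro a b hab
      have := congrArg B hab
      rwa [hBAfun, hBAfun] at this
    have hsurj : Function.Surjective (A x) := by
      have := LinearMap.surjective_of_injective (f := ((A x : (EuclideanSpace ℝ (Fin n)) →L[ℝ] (EuclideanSpace ℝ (Fin n))) : (EuclideanSpace ℝ (Fin n)) →ₗ[ℝ] (EuclideanSpace ℝ (Fin n)))) hinj
      exact this
    have hABfun : ∀ w, A x (B w) = w := by
      intro w
      obtain ⟨v, rfl⟩ := hsurj w
      rw [hBAfun]
    -- lMin (A x) is positive
    set l := lMin (A x) with hl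
    have hBne : ‖B‖ ≠ 0 := by
      intro h0
      have hB0 : B = 0 := (ContinuousLinearMap.opNorm_zero_iff B).mp h0
      have : Nonempty (Fin n) := ⟨⟨0, by omega⟩⟩
      set h : EuclideanSpace ℝ (Fin n) := EuclideanSpace.single (⟨0, by omega⟩ : Fin n) (1:ℝ) with hhdef
      have hh : ‖h‖ = 1 := by simp [hhdef, EuclideanSpace.norm_single]
      have := hBAfun h
      rw [hB0] at this
      simp at this
      rw [← this] at hh
      simp at hh
    have hBpos : 0 < ‖B‖ := lt_of_le_of_ne (norm_nonneg B) (Ne.symm hBne)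
    have hSne : {r | ∃ h : (EuclideanSpace ℝ (Fin n)), ‖h‖ = 1 ∧ r = ‖A x h‖}.Nonempty := by
      have : Nonempty (Fin n) := ⟨⟨0, by omega⟩⟩
      set h : EuclideanSpace ℝ (Fin n) := EuclideanSpace.single (⟨0, by omega⟩ : Fin n) (1:ℝ) with hhdef
      have hh : ‖h‖ = 1 := by simp [hhdef, EuclideanSpace.norm_single]
      exact ⟨‖A x h‖, h, hh, rfl⟩
    have hSbdd : BddBelow {r | ∃ h : (EuclideanSpace ℝ (Fin n)), ‖h‖ = 1 ∧ r = ‖A x h‖} := by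
      refine ⟨0, fun r hr => ?_⟩
      obtain ⟨h, -, rfl⟩ := hr
      exact norm_nonneg _
    have hl_le : ∀ h : (EuclideanSpace ℝ (Fin n)), ‖h‖ = 1 → l ≤ ‖A x h‖ := fun h hh =>
      csInf_le hSbdd ⟨h, hh, rfl⟩
    have hl_pos : 0 < l := by
      have : ‖B‖⁻¹ ≤ l := by
        refine le_csInf hSne ?_
        rintro r ⟨h, hh, rfl⟩
        rw [inv_le_iff_one_le_mul₀ hBpos]
        calc (1 : ℝ) = ‖h‖ := hh.symm
          _ = ‖B (A x h)‖ := by rw [hBAfun]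
          _ ≤ ‖B‖ * ‖A x h‖ := B.le_opNorm _
          _ = ‖A x h‖ * ‖B‖ := mul_comm _ _
      exact lt_of_lt_of_le (inv_pos.mpr hBpos) this
    -- ‖B‖ ≤ l⁻¹
    have hBl : ∀ w : (EuclideanSpace ℝ (Fin n)), l * ‖B w‖ ≤ ‖w‖ := by
      intro w
      rcases eq_or_ne (B w) 0 with h0 | h0
      · simp [h0, norm_nonneg]
      · have hBw : 0 < ‖B w‖ := norm_pos_iff.mpr h0
        have hunit : ‖(‖B w‖⁻¹ • B w : (EuclideanSpace ℝ (Fin n)))‖ = 1 := by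
          rw [norm_smul, norm_inv, norm_norm, inv_mul_cancel₀ hBw.ne']
        have := hl_le _ hunit
        have hAx : A x (‖B w‖⁻¹ • B w) = ‖B w‖⁻¹ • w := by
          rw [ContinuousLinearMap.map_smul, hABfun]
        rw [hAx, norm_smul, norm_inv, norm_norm] at this
        calc l * ‖B w‖ ≤ (‖B w‖⁻¹ * ‖w‖) * ‖B w‖ :=
              mul_le_mul_of_nonneg_right this hBw.le
          _ = ‖w‖ := by field_simp
    have hBnorm : ‖B‖ ≤ l⁻¹ := by
      refine B.opNorm_le_bound (inv_nonneg.mpr hl_pos.le) fun w => ?_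
      rw [inv_mul_eq_div, le_div_iff₀ hl_pos, mul_comm]
      exact hBl w
    -- derivative of f ∘ ψ at φ x
    have hDcomp : HasFDerivAt (f ∘ ψ) ((fderiv ℝ f x).comp B) (φ x) := by
      have hf' : HasFDerivAt f (fderiv ℝ f x) (ψ (φ x)) := by
        rw [hψφ]; exact hfdiff
      exact hf'.comp (φ x) hψdiff
    have hDval : fderiv ℝ (f ∘ ψ) (φ x) = (fderiv ℝ f x).comp B := hDcomp.fderiv
    set D := fderiv ℝ (f ∘ ψ) (φ x) with hDdef
    set m := ‖fderiv ℝ f x‖ with hm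
    have hm0 : 0 ≤ m := norm_nonneg _
    have hD0 : 0 ≤ ‖D‖ := norm_nonneg _
    have hdet_pos : 0 < |detCLM (A x)| := abs_pos.mpr (hAdet x hx)
    set d := |detCLM (A x)| with hd
    -- first inequality
    have hqc2 : d / l ^ n ≤ K := le_trans (le_max_right _ _) (hqc x hx)
    have hqc1 : ‖A x‖ ^ n ≤ K * d := by
      have := le_trans (le_max_left _ _) (hqc x hx)
      rw [div_le_iff₀ hdet_pos] at this
      exact this
    have hDle : ‖D‖ ≤ m * l⁻¹ := by
      calc ‖D‖ = ‖(fderiv ℝ f x).comp B‖ := by rw [hDval]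
        _ ≤ m * ‖B‖ := (fderiv ℝ f x).opNorm_comp_le B
        _ ≤ m * l⁻¹ := mul_le_mul_of_nonneg_left hBnorm hm0
    constructor
    · have hpow : ‖D‖ ^ n ≤ (m * l⁻¹) ^ n :=
        pow_le_pow_left₀ hD0 hDle n
      have : d * ‖D‖ ^ n ≤ d * (m ^ n * (l ^ n)⁻¹) := by
        rw [← inv_pow, ← mul_pow]
        exact mul_le_mul_of_nonneg_left hpow hdet_pos.le
      refine le_trans this ?_
      have hln : 0 < l ^ n := pow_pos hl_pos n
      have : d * (m ^ n * (l ^ n)⁻¹) = (d / l ^ n) * m ^ n := by ring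
      rw [this]
      exact mul_le_mul_of_nonneg_right hqc2 (pow_nonneg hm0 n)
    · -- reverse inequality
      have hfd : fderiv ℝ f x = D.comp (A x) := by
        rw [hDval, ContinuousLinearMap.comp_assoc, hBA, ContinuousLinearMap.comp_id]
      have hmle : m ≤ ‖D‖ * ‖A x‖ := by
        calc m = ‖D.comp (A x)‖ := by rw [hm, hfd]
          _ ≤ ‖D‖ * ‖A x‖ := D.opNorm_comp_le (A x)
      calc m ^ n ≤ (‖D‖ * ‖A x‖) ^ n := pow_le_pow_left₀ hm0 hmle n
        _ = ‖D‖ ^ n * ‖A x‖ ^ n := mul_pow _ _ _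
        _ ≤ ‖D‖ ^ n * (K * d) :=
            mul_le_mul_of_nonneg_left hqc1 (pow_nonneg hD0 n)
        _ = K * (d * ‖D‖ ^ n) := by ring
    -- end key
  -- set up lintegrals
  set g : (EuclideanSpace ℝ (Fin n)) → ENNReal := fun y => ENNReal.ofReal (‖fderiv ℝ (f ∘ ψ) y‖ ^ n) with hg
  have hΩ'img : Ω' = φ '' Ω := hbij.image_eq.symm
  have hdet_eq : ∀ x, (A x).det = detCLM (A x) := fun x => rfl
  have hCV : ∫⁻ y in φ '' Ω, g y =
      ∫⁻ x in Ω, ENNReal.ofReal |(A x).det| * g (φ x) :=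
    lintegral_image_eq_lintegral_abs_det_fderiv_mul volume hΩ.measurableSet
      (fun x hx => (hA x hx).hasFDerivWithinAt) hbij.injOn g
  set P : ENNReal := ∫⁻ x in Ω, ENNReal.ofReal |(A x).det| * g (φ x) with hP
  set Q : ENNReal := ∫⁻ x in Ω, ENNReal.ofReal (‖fderiv ℝ f x‖ ^ n) with hQ
  -- express both Bochner integrals via lintegrals
  have hmeas1 : AEStronglyMeasurable (fun y => ‖fderiv ℝ (f ∘ ψ) y‖ ^ n)
      (volume.restrict Ω') :=
    (((measurable_fderiv ℝ (f ∘ ψ)).norm).pow_const n).aestronglyMeasurable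
  have hmeas2 : AEStronglyMeasurable (fun x => ‖fderiv ℝ f x‖ ^ n)
      (volume.restrict Ω) :=
    (((measurable_fderiv ℝ f).norm).pow_const n).aestronglyMeasurable
  have hLHS : ∫ y in Ω', ‖fderiv ℝ (f ∘ ψ) y‖ ^ n = P.toReal := by
    rw [integral_eq_lintegral_of_nonneg_ae
      (Filter.Eventually.of_forall fun y => pow_nonneg (norm_nonneg _) n) hmeas1]
    rw [hΩ'img]
    rw [hCV]
  have hRHS : ∫ x in Ω, ‖fderiv ℝ f x‖ ^ n = Q.toReal := by
    rw [integral_eq_lintegral_of_nonneg_ae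
      (Filter.Eventually.of_forall fun x => pow_nonneg (norm_nonneg _) n) hmeas2]
  -- comparison of lintegrals
  have hPQ : P ≤ ENNReal.ofReal K * Q := by
    rw [hP, hQ, ← lintegral_const_mul' _ _ ENNReal.ofReal_ne_top]
    refine lintegral_mono_ae ((ae_restrict_mem hΩ.measurableSet).mono fun x hx => ?_)
    have h1 := (key x hx).1
    calc ENNReal.ofReal |(A x).det| * g (φ x)
        = ENNReal.ofReal (|detCLM (A x)| * ‖fderiv ℝ (f ∘ ψ) (φ x)‖ ^ n) := by
          rw [hg, ENNReal.ofReal_mul (abs_nonneg _), hdet_eq]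
      _ ≤ ENNReal.ofReal (K * ‖fderiv ℝ f x‖ ^ n) := ENNReal.ofReal_le_ofReal h1
      _ = ENNReal.ofReal K * ENNReal.ofReal (‖fderiv ℝ f x‖ ^ n) :=
          ENNReal.ofReal_mul hK0
  have hQP : Q ≤ ENNReal.ofReal K * P := by
    rw [hP, hQ, ← lintegral_const_mul' _ _ ENNReal.ofReal_ne_top]
    refine lintegral_mono_ae ((ae_restrict_mem hΩ.measurableSet).mono fun x hx => ?_)
    have h2 := (key x hx).2
    calc ENNReal.ofReal (‖fderiv ℝ f x‖ ^ n)
        ≤ ENNReal.ofReal (K * (|detCLM (A x)| * ‖fderiv ℝ (f ∘ ψ) (φ x)‖ ^ n)) :=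
          ENNReal.ofReal_le_ofReal h2
      _ = ENNReal.ofReal K * (ENNReal.ofReal |(A x).det| * g (φ x)) := by
          rw [ENNReal.ofReal_mul hK0, ENNReal.ofReal_mul (abs_nonneg _), hg, hdet_eq]
  rw [hLHS, hRHS]
  rcases eq_or_ne Q ⊤ with hQtop | hQtop
  · -- Q infinite forces P infinite
    have hPtop : P = ⊤ := by
      by_contra hPne
      have : ENNReal.ofReal K * P ≠ ⊤ :=
        ENNReal.mul_ne_top ENNReal.ofReal_ne_top hPne
      exact this (top_le_iff.mp (hQtop ▸ hQP))
    rw [hPtop, hQtop]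
    simp
  · have hPne : P ≠ ⊤ := by
      intro hPtop
      rw [hPtop] at hPQ
      exact (ENNReal.mul_ne_top ENNReal.ofReal_ne_top hQtop) (top_le_iff.mp hPQ)
    have := ENNReal.toReal_mono (ENNReal.mul_ne_top ENNReal.ofReal_ne_top hQtop) hPQ
    rwa [ENNReal.toReal_mul, ENNReal.toReal_ofReal hK0] at this
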